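/- Let α,β∈ℝ with α≠0 and β≠0, let c₁,c₂∈ℝ, and let V(q₁,q₂)=c₁·exp(−4q₁/β)+c₂·exp(4q₂/α) on ℝ⁴. Then the Hamiltonian flow preserves the bivector P̃ with entries P̃¹²=αp₁+βp₂, P̃¹³=p₁²−p₂²−α ∂V/∂q₂+2V, P̃¹⁴=2p₁p₂−β ∂V/∂q₂, P̃²³=2p₁p₂+α ∂V/∂q₁, P̃²⁴=−p₁²+p₂²+α ∂V/∂q₂−2V, P̃³⁴=2p₁ ∂V/∂q₂ − 2p₂ ∂V/∂q₁: the Lie derivative of P̃ along the Hamiltonian vector field X vanishes identically on ℝ⁴. -/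

import Mathlib

open Real

noncomputable section

/-- Partial derivative of `F` in the `k`-th coordinate direction at `x`. -/
def pd (F : (Fin 4 → ℝ) → ℝ) (k : Fin 4) (x : Fin 4 → ℝ) : ℝ :=
  fderiv ℝ F x (Pi.single k 1)

/-- The canonical Poisson bivector on ℝ⁴. -/
def Pcan : Matrix (Fin 4) (Fin 4) ℝ :=
  !![0, 0, 1, 0; 0, 0, 0, 1; -1, 0, 0, 0; 0, -1, 0, 0]

/-- Lie derivative of a bivector field `T` along a vector field `Xf`:
`(L_X T)^{ij} = Σ_k ( X^k ∂T^{ij}/∂x^k − T^{kj} ∂X^i/∂x^k − T^{ik} ∂X^j/∂x^k )`. -/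
def lieDerivBiv (Xf : (Fin 4 → ℝ) → Fin 4 → ℝ)
    (T : (Fin 4 → ℝ) → Matrix (Fin 4) (Fin 4) ℝ)
    (i j : Fin 4) (x : Fin 4 → ℝ) : ℝ :=
  ∑ k, (Xf x k * pd (fun y => T y i j) k x
      - T x k j * pd (fun y => Xf y i) k x
      - T x i k * pd (fun y => Xf y j) k x)

/-- Lie derivative of a 2-form `ω` along a vector field `Xf`:
`(L_X ω)_{ij} = Σ_k ( X^k ∂ω_{ij}/∂x^k + ω_{kj} ∂X^k/∂x^i + ω_{ik} ∂X^k/∂x^j )`. -/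
def lieDerivForm (Xf : (Fin 4 → ℝ) → Fin 4 → ℝ)
    (ω : (Fin 4 → ℝ) → Matrix (Fin 4) (Fin 4) ℝ)
    (i j : Fin 4) (x : Fin 4 → ℝ) : ℝ :=
  ∑ k, (Xf x k * pd (fun y => ω y i j) k x
      + ω x k j * pd (fun y => Xf y k) i x
      + ω x i k * pd (fun y => Xf y k) j x)

/-- The Jacobiator of a bivector field `A`; `A` satisfies the Jacobi identity iff it
vanishes for all indices `i j k`. -/
def jac (A : (Fin 4 → ℝ) → Matrix (Fin 4) (Fin 4) ℝ)
    (i j k : Fin 4) (x : Fin 4 → ℝ) : ℝ :=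
  ∑ l, (A x l i * pd (fun y => A y j k) l x
      + A x l j * pd (fun y => A y k i) l x
      + A x l k * pd (fun y => A y i j) l x)

/-- The mixed Schouten bracket expression of two bivector fields `A` and `B`. -/
def mixedSchouten (A B : (Fin 4 → ℝ) → Matrix (Fin 4) (Fin 4) ℝ)
    (i j k : Fin 4) (x : Fin 4 → ℝ) : ℝ :=
  ∑ l, (A x l i * pd (fun y => B y j k) l x
      + A x l j * pd (fun y => B y k i) l x
      + A x l k * pd (fun y => B y i j) l x
      + B x l i * pd (fun y => A y j k) l x
      + B x l j * pd (fun y => A y k i) l x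
      + B x l k * pd (fun y => A y i j) l x)

/-- The Toda-type potential `V = c₁ exp(−4q₁/β) + c₂ exp(4q₂/α)`. -/
def VT (α β c₁ c₂ : ℝ) (x : Fin 4 → ℝ) : ℝ :=
  c₁ * Real.exp (-4 * x 0 / β) + c₂ * Real.exp (4 * x 1 / α)

/-- The Hamiltonian vector field `X = (p₁, p₂, −∂V/∂q₁, −∂V/∂q₂)`. -/
def XT (α β c₁ c₂ : ℝ) (x : Fin 4 → ℝ) : Fin 4 → ℝ :=
  ![x 2, x 3, -(pd (VT α β c₁ c₂) 0 x), -(pd (VT α β c₁ c₂) 1 x)]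

/-- The invariant bivector `P̃` associated with the potential. -/
def PtT (α β c₁ c₂ : ℝ) (x : Fin 4 → ℝ) : Matrix (Fin 4) (Fin 4) ℝ :=
  let p1 := x 2; let p2 := x 3
  let V1 := pd (VT α β c₁ c₂) 0 x
  let V2 := pd (VT α β c₁ c₂) 1 x
  let v := VT α β c₁ c₂ x
  let e12 := α * p1 + β * p2
  let e13 := p1 ^ 2 - p2 ^ 2 - α * V2 + 2 * v
  let e14 := 2 * p1 * p2 - β * V2
  let e23 := 2 * p1 * p2 + α * V1
  let e24 := -p1 ^ 2 + p2 ^ 2 + α * V2 - 2 * v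
  let e34 := 2 * p1 * V2 - 2 * p2 * V1
  !![0, e12, e13, e14;
     -(e12), 0, e23, e24;
     -(e13), -(e23), 0, e34;
     -(e14), -(e24), -(e34), 0]

abbrev prj (k : Fin 4) : (Fin 4 → ℝ) →L[ℝ] ℝ := ContinuousLinearMap.proj k

def Eu (β : ℝ) (y : Fin 4 → ℝ) : ℝ := Real.exp (-4 * y 0 / β)

def Ew (α : ℝ) (y : Fin 4 → ℝ) : ℝ := Real.exp (4 * y 1 / α)

lemma hasF_coord (k : Fin 4) (x : Fin 4 → ℝ) :
    HasFDerivAt (fun y : Fin 4 → ℝ => y k) (prj k) x :=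
  hasFDerivAt_apply k x

lemma hasF_exp (c b : ℝ) (k : Fin 4) (x : Fin 4 → ℝ) :
    HasFDerivAt (fun y : Fin 4 → ℝ => Real.exp (c * y k / b))
      ((Real.exp (c * x k / b) * (c / b)) • prj k) x := by
  have h : HasFDerivAt (fun y : Fin 4 → ℝ => c * y k / b) ((c / b) • prj k) x := by
    have h1 := ((hasF_coord k x).const_mul c).mul_const (1/b)
    have hfun : (fun y : Fin 4 → ℝ => c * y k / b) = fun y => c * y k * (1/b) := by
      funext y; ring
    have hclm : ((c/b) • prj k) = (1/b) • c • prj k := by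
      rw [smul_smul]; congr 1; ring
    rw [hfun, hclm]; exact h1
  have h2 := h.exp
  rw [smul_smul] at h2
  exact h2

lemma hasF_Eu (β : ℝ) (x : Fin 4 → ℝ) :
    HasFDerivAt (Eu β) ((Eu β x * (-4 / β)) • prj 0) x := hasF_exp (-4) β 0 x

lemma hasF_Ew (α : ℝ) (x : Fin 4 → ℝ) :
    HasFDerivAt (Ew α) ((Ew α x * (4 / α)) • prj 1) x := hasF_exp 4 α 1 x

lemma HasFDerivAt.pd_eq {f : (Fin 4 → ℝ) → ℝ} {L : (Fin 4 → ℝ) →L[ℝ] ℝ} {x : Fin 4 → ℝ}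
    (h : HasFDerivAt f L x) (k : Fin 4) : pd f k x = L (Pi.single k 1) := by
  rw [pd, h.fderiv]

lemma hasF_VT (α β c₁ c₂ : ℝ) (x : Fin 4 → ℝ) :
    HasFDerivAt (VT α β c₁ c₂)
      ((c₁ * (-4/β) * Eu β x) • prj 0 + (c₂ * (4/α) * Ew α x) • prj 1) x := by
  have h := ((hasF_Eu β x).const_mul c₁).add ((hasF_Ew α x).const_mul c₂)
  have hfun : VT α β c₁ c₂ = fun y => c₁ * Eu β y + c₂ * Ew α y := rfl
  rw [hfun]
  refine h.congr_fderiv ?_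
  ext y
  simp [smul_smul]
  ring

lemma pdVT0 (α β c₁ c₂ : ℝ) (x : Fin 4 → ℝ) :
    pd (VT α β c₁ c₂) 0 x = c₁ * (-4/β) * Eu β x := by
  rw [(hasF_VT α β c₁ c₂ x).pd_eq]; simp [Pi.single_apply]

lemma pdVT1 (α β c₁ c₂ : ℝ) (x : Fin 4 → ℝ) :
    pd (VT α β c₁ c₂) 1 x = c₂ * (4/α) * Ew α x := by
  rw [(hasF_VT α β c₁ c₂ x).pd_eq]; simp [Pi.single_apply]

lemma pdX0 (α β c₁ c₂ : ℝ) (k : Fin 4) (x : Fin 4 → ℝ) :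
    pd (fun y => XT α β c₁ c₂ y 0) k x = ![0,0,1,0] k := by
  have hfun : (fun y => XT α β c₁ c₂ y 0) = fun y : Fin 4 → ℝ => y 2 := rfl
  rw [hfun, (hasF_coord 2 x).pd_eq]
  fin_cases k <;> simp [Pi.single_apply]

lemma pdX1 (α β c₁ c₂ : ℝ) (k : Fin 4) (x : Fin 4 → ℝ) :
    pd (fun y => XT α β c₁ c₂ y 1) k x = ![0,0,0,1] k := by
  have hfun : (fun y => XT α β c₁ c₂ y 1) = fun y : Fin 4 → ℝ => y 3 := rfl
  rw [hfun, (hasF_coord 3 x).pd_eq]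
  fin_cases k <;> simp [Pi.single_apply]

lemma pdX2 (α β c₁ c₂ : ℝ) (k : Fin 4) (x : Fin 4 → ℝ) :
    pd (fun y => XT α β c₁ c₂ y 2) k x = ![-(c₁ * (-4/β) * (-4/β) * Eu β x),0,0,0] k := by
  have hfun : (fun y => XT α β c₁ c₂ y 2) = fun y : Fin 4 → ℝ => -(c₁ * (-4/β) * Eu β y) := by
    funext y
    show -(pd (VT α β c₁ c₂) 0 y) = _
    rw [pdVT0]
  have hF := ((hasF_Eu β x).const_mul (c₁ * (-4/β))).neg
  rw [hfun]; erw [hF.pd_eq]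
  fin_cases k <;> simp [Pi.single_apply, -mul_eq_mul_left_iff, -mul_eq_mul_right_iff] <;> try ring

lemma pdX3 (α β c₁ c₂ : ℝ) (k : Fin 4) (x : Fin 4 → ℝ) :
    pd (fun y => XT α β c₁ c₂ y 3) k x = ![0, -(c₂ * (4/α) * (4/α) * Ew α x),0,0] k := by
  have hfun : (fun y => XT α β c₁ c₂ y 3) = fun y : Fin 4 → ℝ => -(c₂ * (4/α) * Ew α y) := by
    funext y
    show -(pd (VT α β c₁ c₂) 1 y) = _
    rw [pdVT1]
  have hF := ((hasF_Ew α x).const_mul (c₂ * (4/α))).neg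
  rw [hfun]; erw [hF.pd_eq]
  fin_cases k <;> simp [Pi.single_apply, -mul_eq_mul_left_iff, -mul_eq_mul_right_iff] <;> try ring

lemma pdP01 (α β c₁ c₂ : ℝ) (k : Fin 4) (x : Fin 4 → ℝ) :
    pd (fun y => PtT α β c₁ c₂ y 0 1) k x = ![0,0,α,β] k := by
  have hfun : (fun y => PtT α β c₁ c₂ y 0 1) = fun y : Fin 4 → ℝ => α * y 2 + β * y 3 := rfl
  have hF := ((hasF_coord 2 x).const_mul α).add ((hasF_coord 3 x).const_mul β)
  rw [hfun]; erw [hF.pd_eq]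
  fin_cases k <;> simp [Pi.single_apply]

lemma pdP02 (α β c₁ c₂ : ℝ) (k : Fin 4) (x : Fin 4 → ℝ) :
    pd (fun y => PtT α β c₁ c₂ y 0 2) k x =
      ![2 * (c₁ * (-4/β) * Eu β x),
        -(α * (c₂ * (4/α) * (4/α) * Ew α x)) + 2 * (c₂ * (4/α) * Ew α x),
        2 * x 2, -(2 * x 3)] k := by
  have hfun : (fun y => PtT α β c₁ c₂ y 0 2) =
      fun y : Fin 4 → ℝ => y 2 * y 2 - y 3 * y 3 - α * (c₂ * (4/α) * Ew α y)
        + 2 * (c₁ * Eu β y + c₂ * Ew α y) := by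
    funext y
    show y 2 ^ 2 - y 3 ^ 2 - α * pd (VT α β c₁ c₂) 1 y + 2 * VT α β c₁ c₂ y = _
    rw [pdVT1, show VT α β c₁ c₂ y = c₁ * Eu β y + c₂ * Ew α y from rfl]; ring
  have hF := ((((hasF_coord 2 x).mul (hasF_coord 2 x)).sub ((hasF_coord 3 x).mul (hasF_coord 3 x))).sub
      (((hasF_Ew α x).const_mul (c₂ * (4/α))).const_mul α)).add
      ((((hasF_Eu β x).const_mul c₁).add ((hasF_Ew α x).const_mul c₂)).const_mul 2)
  rw [hfun]; erw [hF.pd_eq]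
  fin_cases k <;> simp [Pi.single_apply, -mul_eq_mul_left_iff, -mul_eq_mul_right_iff] <;> try ring

lemma pdP03 (α β c₁ c₂ : ℝ) (k : Fin 4) (x : Fin 4 → ℝ) :
    pd (fun y => PtT α β c₁ c₂ y 0 3) k x =
      ![0, -(β * (c₂ * (4/α) * (4/α) * Ew α x)), 2 * x 3, 2 * x 2] k := by
  have hfun : (fun y => PtT α β c₁ c₂ y 0 3) =
      fun y : Fin 4 → ℝ => 2 * y 2 * y 3 - β * (c₂ * (4/α) * Ew α y) := by
    funext y
    show 2 * y 2 * y 3 - β * pd (VT α β c₁ c₂) 1 y = _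
    rw [pdVT1]
  have hF := (((hasF_coord 2 x).const_mul 2).mul (hasF_coord 3 x)).sub
      (((hasF_Ew α x).const_mul (c₂ * (4/α))).const_mul β)
  rw [hfun]; erw [hF.pd_eq]
  fin_cases k <;> simp [Pi.single_apply, -mul_eq_mul_left_iff, -mul_eq_mul_right_iff] <;> try ring

lemma pdP12 (α β c₁ c₂ : ℝ) (k : Fin 4) (x : Fin 4 → ℝ) :
    pd (fun y => PtT α β c₁ c₂ y 1 2) k x =
      ![α * (c₁ * (-4/β) * (-4/β) * Eu β x), 0, 2 * x 3, 2 * x 2] k := by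
  have hfun : (fun y => PtT α β c₁ c₂ y 1 2) =
      fun y : Fin 4 → ℝ => 2 * y 2 * y 3 + α * (c₁ * (-4/β) * Eu β y) := by
    funext y
    show 2 * y 2 * y 3 + α * pd (VT α β c₁ c₂) 0 y = _
    rw [pdVT0]
  have hF := (((hasF_coord 2 x).const_mul 2).mul (hasF_coord 3 x)).add
      (((hasF_Eu β x).const_mul (c₁ * (-4/β))).const_mul α)
  rw [hfun]; erw [hF.pd_eq]
  fin_cases k <;> simp [Pi.single_apply, -mul_eq_mul_left_iff, -mul_eq_mul_right_iff] <;> try ring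

lemma pdP13 (α β c₁ c₂ : ℝ) (k : Fin 4) (x : Fin 4 → ℝ) :
    pd (fun y => PtT α β c₁ c₂ y 1 3) k x =
      ![-(2 * (c₁ * (-4/β) * Eu β x)),
        α * (c₂ * (4/α) * (4/α) * Ew α x) - 2 * (c₂ * (4/α) * Ew α x),
        -(2 * x 2), 2 * x 3] k := by
  have hfun : (fun y => PtT α β c₁ c₂ y 1 3) =
      fun y : Fin 4 → ℝ => -(y 2 * y 2) + y 3 * y 3 + α * (c₂ * (4/α) * Ew α y)
        - 2 * (c₁ * Eu β y + c₂ * Ew α y) := by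
    funext y
    show -y 2 ^ 2 + y 3 ^ 2 + α * pd (VT α β c₁ c₂) 1 y - 2 * VT α β c₁ c₂ y = _
    rw [pdVT1, show VT α β c₁ c₂ y = c₁ * Eu β y + c₂ * Ew α y from rfl]; ring
  have hF := (((((hasF_coord 2 x).mul (hasF_coord 2 x)).neg).add
      ((hasF_coord 3 x).mul (hasF_coord 3 x))).add
      (((hasF_Ew α x).const_mul (c₂ * (4/α))).const_mul α)).sub
      ((((hasF_Eu β x).const_mul c₁).add ((hasF_Ew α x).const_mul c₂)).const_mul 2)
  rw [hfun]; erw [hF.pd_eq]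
  fin_cases k <;> simp [Pi.single_apply, -mul_eq_mul_left_iff, -mul_eq_mul_right_iff] <;> try ring

lemma pdP23 (α β c₁ c₂ : ℝ) (k : Fin 4) (x : Fin 4 → ℝ) :
    pd (fun y => PtT α β c₁ c₂ y 2 3) k x =
      ![-(2 * x 3 * (c₁ * (-4/β) * (-4/β) * Eu β x)),
        2 * x 2 * (c₂ * (4/α) * (4/α) * Ew α x),
        2 * (c₂ * (4/α) * Ew α x), -(2 * (c₁ * (-4/β) * Eu β x))] k := by
  have hfun : (fun y => PtT α β c₁ c₂ y 2 3) =
      fun y : Fin 4 → ℝ => 2 * y 2 * (c₂ * (4/α) * Ew α y)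
        - 2 * y 3 * (c₁ * (-4/β) * Eu β y) := by
    funext y
    show 2 * y 2 * pd (VT α β c₁ c₂) 1 y - 2 * y 3 * pd (VT α β c₁ c₂) 0 y = _
    rw [pdVT0, pdVT1]
  have hF := (((hasF_coord 2 x).const_mul 2).mul
      ((hasF_Ew α x).const_mul (c₂ * (4/α)))).sub
      (((hasF_coord 3 x).const_mul 2).mul ((hasF_Eu β x).const_mul (c₁ * (-4/β))))
  rw [hfun]; erw [hF.pd_eq]
  fin_cases k <;> simp [Pi.single_apply, -mul_eq_mul_left_iff, -mul_eq_mul_right_iff] <;> try ring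

lemma pdP10 (α β c₁ c₂ : ℝ) (k : Fin 4) (x : Fin 4 → ℝ) :
    pd (fun y => PtT α β c₁ c₂ y 1 0) k x = ![0,0,-α,-β] k := by
  have hfun : (fun y => PtT α β c₁ c₂ y 1 0) = fun y : Fin 4 → ℝ => -(α * y 2 + β * y 3) := rfl
  have hF := (((hasF_coord 2 x).const_mul α).add ((hasF_coord 3 x).const_mul β)).neg
  rw [hfun]; erw [hF.pd_eq]
  fin_cases k <;> simp [Pi.single_apply, -mul_eq_mul_left_iff, -mul_eq_mul_right_iff] <;> try ring

lemma pdP20 (α β c₁ c₂ : ℝ) (k : Fin 4) (x : Fin 4 → ℝ) :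
    pd (fun y => PtT α β c₁ c₂ y 2 0) k x =
      ![-(2 * (c₁ * (-4/β) * Eu β x)),
        -(-(α * (c₂ * (4/α) * (4/α) * Ew α x)) + 2 * (c₂ * (4/α) * Ew α x)),
        -(2 * x 2), 2 * x 3] k := by
  have hfun : (fun y => PtT α β c₁ c₂ y 2 0) =
      fun y : Fin 4 → ℝ => -(y 2 * y 2 - y 3 * y 3 - α * (c₂ * (4/α) * Ew α y)
        + 2 * (c₁ * Eu β y + c₂ * Ew α y)) := by
    funext y
    show -(y 2 ^ 2 - y 3 ^ 2 - α * pd (VT α β c₁ c₂) 1 y + 2 * VT α β c₁ c₂ y) = _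
    rw [pdVT1, show VT α β c₁ c₂ y = c₁ * Eu β y + c₂ * Ew α y from rfl]; ring
  have hF := (((((hasF_coord 2 x).mul (hasF_coord 2 x)).sub ((hasF_coord 3 x).mul (hasF_coord 3 x))).sub
      (((hasF_Ew α x).const_mul (c₂ * (4/α))).const_mul α)).add
      ((((hasF_Eu β x).const_mul c₁).add ((hasF_Ew α x).const_mul c₂)).const_mul 2)).neg
  rw [hfun]; erw [hF.pd_eq]
  fin_cases k <;> simp [Pi.single_apply, -mul_eq_mul_left_iff, -mul_eq_mul_right_iff] <;> try ring

lemma pdP30 (α β c₁ c₂ : ℝ) (k : Fin 4) (x : Fin 4 → ℝ) :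
    pd (fun y => PtT α β c₁ c₂ y 3 0) k x =
      ![0, β * (c₂ * (4/α) * (4/α) * Ew α x), -(2 * x 3), -(2 * x 2)] k := by
  have hfun : (fun y => PtT α β c₁ c₂ y 3 0) =
      fun y : Fin 4 → ℝ => -(2 * y 2 * y 3 - β * (c₂ * (4/α) * Ew α y)) := by
    funext y
    show -(2 * y 2 * y 3 - β * pd (VT α β c₁ c₂) 1 y) = _
    rw [pdVT1]
  have hF := ((((hasF_coord 2 x).const_mul 2).mul (hasF_coord 3 x)).sub
      (((hasF_Ew α x).const_mul (c₂ * (4/α))).const_mul β)).neg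
  rw [hfun]; erw [hF.pd_eq]
  fin_cases k <;> simp [Pi.single_apply, -mul_eq_mul_left_iff, -mul_eq_mul_right_iff] <;> try ring

lemma pdP21 (α β c₁ c₂ : ℝ) (k : Fin 4) (x : Fin 4 → ℝ) :
    pd (fun y => PtT α β c₁ c₂ y 2 1) k x =
      ![-(α * (c₁ * (-4/β) * (-4/β) * Eu β x)), 0, -(2 * x 3), -(2 * x 2)] k := by
  have hfun : (fun y => PtT α β c₁ c₂ y 2 1) =
      fun y : Fin 4 → ℝ => -(2 * y 2 * y 3 + α * (c₁ * (-4/β) * Eu β y)) := by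
    funext y
    show -(2 * y 2 * y 3 + α * pd (VT α β c₁ c₂) 0 y) = _
    rw [pdVT0]
  have hF := ((((hasF_coord 2 x).const_mul 2).mul (hasF_coord 3 x)).add
      (((hasF_Eu β x).const_mul (c₁ * (-4/β))).const_mul α)).neg
  rw [hfun]; erw [hF.pd_eq]
  fin_cases k <;> simp [Pi.single_apply, -mul_eq_mul_left_iff, -mul_eq_mul_right_iff] <;> try ring

lemma pdP31 (α β c₁ c₂ : ℝ) (k : Fin 4) (x : Fin 4 → ℝ) :
    pd (fun y => PtT α β c₁ c₂ y 3 1) k x =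
      ![2 * (c₁ * (-4/β) * Eu β x),
        -(α * (c₂ * (4/α) * (4/α) * Ew α x) - 2 * (c₂ * (4/α) * Ew α x)),
        2 * x 2, -(2 * x 3)] k := by
  have hfun : (fun y => PtT α β c₁ c₂ y 3 1) =
      fun y : Fin 4 → ℝ => -(-(y 2 * y 2) + y 3 * y 3 + α * (c₂ * (4/α) * Ew α y)
        - 2 * (c₁ * Eu β y + c₂ * Ew α y)) := by
    funext y
    show -(-y 2 ^ 2 + y 3 ^ 2 + α * pd (VT α β c₁ c₂) 1 y - 2 * VT α β c₁ c₂ y) = _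
    rw [pdVT1, show VT α β c₁ c₂ y = c₁ * Eu β y + c₂ * Ew α y from rfl]; ring
  have hF := ((((((hasF_coord 2 x).mul (hasF_coord 2 x)).neg).add
      ((hasF_coord 3 x).mul (hasF_coord 3 x))).add
      (((hasF_Ew α x).const_mul (c₂ * (4/α))).const_mul α)).sub
      ((((hasF_Eu β x).const_mul c₁).add ((hasF_Ew α x).const_mul c₂)).const_mul 2)).neg
  rw [hfun]; erw [hF.pd_eq]
  fin_cases k <;> simp [Pi.single_apply, -mul_eq_mul_left_iff, -mul_eq_mul_right_iff] <;> try ring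

lemma pdP32 (α β c₁ c₂ : ℝ) (k : Fin 4) (x : Fin 4 → ℝ) :
    pd (fun y => PtT α β c₁ c₂ y 3 2) k x =
      ![2 * x 3 * (c₁ * (-4/β) * (-4/β) * Eu β x),
        -(2 * x 2 * (c₂ * (4/α) * (4/α) * Ew α x)),
        -(2 * (c₂ * (4/α) * Ew α x)), 2 * (c₁ * (-4/β) * Eu β x)] k := by
  have hfun : (fun y => PtT α β c₁ c₂ y 3 2) =
      fun y : Fin 4 → ℝ => -(2 * y 2 * (c₂ * (4/α) * Ew α y)
        - 2 * y 3 * (c₁ * (-4/β) * Eu β y)) := by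
    funext y
    show -(2 * y 2 * pd (VT α β c₁ c₂) 1 y - 2 * y 3 * pd (VT α β c₁ c₂) 0 y) = _
    rw [pdVT0, pdVT1]
  have hF := ((((hasF_coord 2 x).const_mul 2).mul
      ((hasF_Ew α x).const_mul (c₂ * (4/α)))).sub
      (((hasF_coord 3 x).const_mul 2).mul ((hasF_Eu β x).const_mul (c₁ * (-4/β))))).neg
  rw [hfun]; erw [hF.pd_eq]
  fin_cases k <;> simp [Pi.single_apply, -mul_eq_mul_left_iff, -mul_eq_mul_right_iff] <;> try ring

lemma pdPdiag (α β c₁ c₂ : ℝ) (i k : Fin 4) (x : Fin 4 → ℝ) :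
    pd (fun y => PtT α β c₁ c₂ y i i) k x = 0 := by
  have hfun : (fun y => PtT α β c₁ c₂ y i i) = fun _ : Fin 4 → ℝ => (0:ℝ) := by
    funext y
    fin_cases i <;> rfl
  rw [hfun, (hasFDerivAt_const (0:ℝ) x).pd_eq]
  simp

set_option maxHeartbeats 4000000 in
/-- for `V = c₁ exp(−4q₁/β) + c₂ exp(4q₂/α)`, the Hamiltonian flow preserves
`P̃`: `L_X P̃ = 0` on all of ℝ⁴. -/
theorem statement16 (α β : ℝ) (hα : α ≠ 0) (hβ : β ≠ 0) (c₁ c₂ : ℝ) :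
    ∀ (i j : Fin 4) (x : Fin 4 → ℝ),
      lieDerivBiv (XT α β c₁ c₂) (PtT α β c₁ c₂) i j x = 0 := by
  intro i j x
  fin_cases i <;> fin_cases j <;>
  · simp only [Fin.zero_eta, Fin.mk_one, Fin.reduceFinMk]
    simp only [lieDerivBiv, Fin.sum_univ_four, Fin.isValue,
      pdP01, pdP02, pdP03, pdP10, pdP12, pdP13, pdP20, pdP21, pdP23,
      pdP30, pdP31, pdP32, pdPdiag, pdX0, pdX1, pdX2, pdX3]
    simp only [XT, PtT, pdVT0, pdVT1,
      show VT α β c₁ c₂ x = c₁ * Eu β x + c₂ * Ew α x from rfl]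
    simp only [Matrix.cons_val_zero, Matrix.cons_val_one, Matrix.head_cons,
      Matrix.cons_val_two, Matrix.cons_val_three, Matrix.tail_cons, Matrix.head_fin_const,
      Matrix.cons_val', Matrix.of_apply, Matrix.cons_val_fin_one, Matrix.empty_val']
    try field_simp
    try ring

end
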